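/- Let g = (f, z) ∈ ℤ₂ ≀ ℤ. Let m be the smallest integer i with f(i) ≠ e if f is not identically trivial, and m = 0 otherwise; let n be the largest integer j with f(j) ≠ e if f is not identically trivial, and n = 0 otherwise. Then the word length of g with respect to the generators {a, h} equals #supp f + min{ 2·max{−m, 0} + max{n, 0} + |z − max{n, 0}| , 2·max{n, 0} + max{−m, 0} + |z + max{−m, 0}| }, where #supp f is the number of integers j with f(j) ≠ e. -/

import Mathlib

open Multiplicative

noncomputable section

/-- Convolution `w₁ ⊗ w₂` of two words: the word of length `max |w₁| |w₂|` whose `k`-th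
letter has `i`-th component the `k`-th letter of `wᵢ` (or `none`, the padding symbol `⋄`,
if `k` exceeds `|wᵢ|`). -/
def conv {α : Type} (w₁ w₂ : List α) : List (Option α × Option α) :=
  (List.range (max w₁.length w₂.length)).map fun k => (w₁[k]?, w₂[k]?)

/-- The word length of `g` with respect to the generating set `S`:
the least `n` such that `g` is a product of `n` elements of `S ∪ S⁻¹`. -/
def wordLength {G : Type*} [Group G] (S : Set G) (g : G) : ℕ :=
  sInf {n | ∃ l : List G, l.length = n ∧ (∀ x ∈ l, x ∈ S ∨ x⁻¹ ∈ S) ∧ l.prod = g}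

/-- The shift action of `B` on finitely supported functions `B → A` (written additively
via `Additive A`): `(b • f) x = f (b⁻¹ * x)`. -/
def lampAction (A B : Type*) [Group A] [Group B] :
    B →* MulAut (Multiplicative (B →₀ Additive A)) where
  toFun b :=
    { toFun := fun f => ofAdd (Finsupp.equivMapDomain (Equiv.mulLeft b) f.toAdd)
      invFun := fun f => ofAdd (Finsupp.equivMapDomain (Equiv.mulLeft b).symm f.toAdd)
      left_inv := fun f => toAdd.injective (by ext x; simp)
      right_inv := fun f => toAdd.injective (by ext x; simp)
      map_mul' := fun f g => toAdd.injective (by ext x; simp) }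
  map_one' := MulEquiv.ext fun f => toAdd.injective (by ext x; simp; rfl)
  map_mul' := fun b₁ b₂ => MulEquiv.ext fun f => toAdd.injective (by
    ext x
    simp [MulAut.mul_apply, MulEquiv.coe_mk, mul_assoc]; rfl)

/-- The restricted wreath product `A ≀ B`: pairs `(f, b)` with `f : B → A` finitely
supported and `b ∈ B`, with multiplication `(f, b)·(f′, b′) = (f·(f′ ∘ (b⁻¹·)), b·b′)`. -/
abbrev WreathProduct (A B : Type*) [Group A] [Group B] :=
  Multiplicative (B →₀ Additive A) ⋊[lampAction A B] B

/-- The element of `A ≀ B` whose function component is supported at `b` with value `x`,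
and whose `B`-component is `c`. -/
def wreath.mk' {A B : Type*} [Group A] [Group B] (b : B) (x : A) (c : B) :
    WreathProduct A B :=
  ⟨ofAdd (Finsupp.single b (Additive.ofMul x)), c⟩

/-- The lamplighter group `ℤ₂ ≀ ℤ`. -/
abbrev Lamplighter := WreathProduct (Multiplicative (ZMod 2)) (Multiplicative ℤ)

/-- The generator `a = (𝟎, 1)` of `ℤ₂ ≀ ℤ` (the shift). -/
def genA : Lamplighter := ⟨1, ofAdd (1 : ℤ)⟩

/-- The generator `h = (δ₀, 0)` of `ℤ₂ ≀ ℤ` (the lamp at the origin). -/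
def genH : Lamplighter := wreath.mk' (ofAdd (0 : ℤ)) (ofAdd (1 : ZMod 2)) 1

/-- The support of the lamp configuration of `g = (f, z) ∈ ℤ₂ ≀ ℤ`, as a finite set of
integers: the set of `j ∈ ℤ` with `f(j) ≠ e`. -/
def suppZ (g : Lamplighter) : Finset ℤ :=
  (Multiplicative.toAdd g.left).support.image Multiplicative.toAdd

/-- The smallest `i ∈ ℤ` with `f(i) ≠ e` (and `0` if `f` is identically trivial). -/
def mOf (g : Lamplighter) : ℤ :=
  if h : (suppZ g).Nonempty then (suppZ g).min' h else 0

/-- The largest `j ∈ ℤ` with `f(j) ≠ e` (and `0` if `f` is identically trivial). -/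
def nOf (g : Lamplighter) : ℤ :=
  if h : (suppZ g).Nonempty then (suppZ g).max' h else 0

/-- The position `z ∈ ℤ` of the lamplighter of `g = (f, z) ∈ ℤ₂ ≀ ℤ`. -/
def zOf (g : Lamplighter) : ℤ := Multiplicative.toAdd g.right


abbrev Cfg := Multiplicative ℤ →₀ Additive (Multiplicative (ZMod 2))

def LP.mk (f : Cfg) (p : ℤ) : Lamplighter := ⟨ofAdd f, ofAdd p⟩

def shiftC (p : ℤ) (f : Cfg) : Cfg := Finsupp.equivMapDomain (Equiv.mulLeft (ofAdd p)) f

lemma lampAction_apply (b : Multiplicative ℤ) (f : Cfg) :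
    (lampAction (Multiplicative (ZMod 2)) (Multiplicative ℤ) b) (ofAdd f)
      = ofAdd (Finsupp.equivMapDomain (Equiv.mulLeft b) f) := rfl

lemma LP.mk_mul (f f' : Cfg) (p p' : ℤ) :
    LP.mk f p * LP.mk f' p' = LP.mk (f + shiftC p f') (p + p') := by
  unfold LP.mk shiftC
  ext <;> simp [SemidirectProduct.mul_left, SemidirectProduct.mul_right, lampAction_apply]

example : (1 : Lamplighter) = LP.mk 0 0 := rfl
example (g : Lamplighter) : g = LP.mk (toAdd g.left) (toAdd g.right) := rfl
example : genA = LP.mk 0 1 := rfl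
def e1 : Additive (Multiplicative (ZMod 2)) := Additive.ofMul (ofAdd (1 : ZMod 2))
def sing (x : ℤ) : Cfg := Finsupp.single (ofAdd x) e1
example : genH = LP.mk (sing 0) 0 := rfl
example : genA⁻¹ = LP.mk 0 (-1) := by
  rw [show genA = LP.mk 0 1 from rfl]
  rw [eq_comm, eq_inv_iff_mul_eq_one, LP.mk_mul]
  norm_num; rfl
example : ∀ a : Additive (Multiplicative (ZMod 2)), a ≠ 0 → a = e1 := by decide
example : e1 + e1 = 0 := by decide
example : genH⁻¹ = genH := by
  rw [eq_comm, eq_inv_iff_mul_eq_one, show genH = LP.mk (sing 0) 0 from rfl, LP.mk_mul]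
  have : shiftC 0 (sing 0) = sing 0 := by
    unfold shiftC
    have : Equiv.mulLeft (ofAdd (0:ℤ)) = Equiv.refl _ := by ext x; simp
    rw [this]; exact Finsupp.equivMapDomain_refl _
  rw [this, show sing 0 + sing 0 = 0 by unfold sing; rw [← Finsupp.single_add, show e1 + e1 = 0 by decide, Finsupp.single_zero]]
  rfl

-- shiftC lemmas
lemma shiftC_zero_fn (p : ℤ) : shiftC p 0 = 0 := rfl
lemma shiftC_zero (f : Cfg) : shiftC 0 f = f := by
  unfold shiftC
  have : Equiv.mulLeft (ofAdd (0:ℤ)) = Equiv.refl _ := by ext x; simp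
  rw [this]; exact Finsupp.equivMapDomain_refl _
lemma shiftC_add (p : ℤ) (f f' : Cfg) : shiftC p (f + f') = shiftC p f + shiftC p f' := by
  unfold shiftC; ext x; simp
lemma shiftC_shiftC (p q : ℤ) (f : Cfg) : shiftC p (shiftC q f) = shiftC (p + q) f := by
  unfold shiftC
  rw [← Finsupp.equivMapDomain_trans]
  congr 1
  ext x
  simp [ofAdd_add, mul_assoc]
lemma shiftC_sing (p x : ℤ) : shiftC p (sing x) = sing (p + x) := by
  unfold shiftC sing
  rw [Finsupp.equivMapDomain_single]
  congr 1
lemma mem_shiftC_support (p : ℤ) (f : Cfg) (x : Multiplicative ℤ) :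
    x ∈ (shiftC p f).support ↔ (ofAdd p)⁻¹ * x ∈ f.support := by
  simp only [Finsupp.mem_support_iff]
  rw [shiftC, Finsupp.equivMapDomain_apply]
  rfl

lemma shiftC_support (p : ℤ) (f : Cfg) :
    (shiftC p f).support = f.support.image (fun x => ofAdd p * x) := by
  ext x
  rw [mem_shiftC_support, Finset.mem_image]
  constructor
  · intro h; exact ⟨_, h, by group⟩
  · rintro ⟨y, hy, rfl⟩; simpa using hy

lemma shiftC_support_card (p : ℤ) (f : Cfg) :
    (shiftC p f).support.card = f.support.card := by
  rw [shiftC_support]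
  exact Finset.card_image_of_injective _ (mul_right_injective _)

inductive Mv | R | L | T
deriving DecidableEq

def Mv.stepOf : Mv → ℤ
  | .R => 1
  | .L => -1
  | .T => 0

def Mv.genOf : Mv → Lamplighter
  | .R => genA
  | .L => genA⁻¹
  | .T => genH

def Mv.cfgOf : Mv → Cfg
  | .T => sing 0
  | _ => 0

lemma Mv.genOf_eq (m : Mv) : m.genOf = LP.mk m.cfgOf m.stepOf := by
  cases m
  · rfl
  · show genA⁻¹ = _
    rw [show genA = LP.mk 0 1 from rfl, eq_comm, eq_inv_iff_mul_eq_one, LP.mk_mul]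
    norm_num
    rfl
  · rfl

def walk (l : List Mv) : ℤ := (l.map Mv.stepOf).sum

def cfg : List Mv → Cfg
  | [] => 0
  | m :: l => m.cfgOf + shiftC m.stepOf (cfg l)

lemma walk_nil : walk [] = 0 := rfl
lemma walk_cons (m : Mv) (l : List Mv) : walk (m :: l) = m.stepOf + walk l := by
  simp [walk]
lemma walk_append (l₁ l₂ : List Mv) : walk (l₁ ++ l₂) = walk l₁ + walk l₂ := by
  simp [walk]

lemma prod_eq (l : List Mv) : (l.map Mv.genOf).prod = LP.mk (cfg l) (walk l) := by
  induction l with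
  | nil => rfl
  | cons m l ih =>
      rw [List.map_cons, List.prod_cons, ih, Mv.genOf_eq, LP.mk_mul, walk_cons]
      rfl

lemma cfg_append (l₁ l₂ : List Mv) :
    cfg (l₁ ++ l₂) = cfg l₁ + shiftC (walk l₁) (cfg l₂) := by
  induction l₁ with
  | nil => simp [cfg, shiftC_zero, walk_nil]
  | cons m l ih =>
      simp only [List.cons_append, cfg, List.append_eq, ih, shiftC_add, shiftC_shiftC, walk_cons, add_assoc]

-- number of non-T moves
def nonT (l : List Mv) : ℕ := l.countP (fun m => m ≠ Mv.T)
def cntT (l : List Mv) : ℕ := l.countP (fun m => m = Mv.T)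

lemma nonT_cons (m : Mv) (l : List Mv) :
    nonT (m :: l) = (if m = Mv.T then 0 else 1) + nonT l := by
  simp [nonT, List.countP_cons]
  cases m <;> simp [Nat.add_comm]
lemma nonT_append (l₁ l₂ : List Mv) : nonT (l₁ ++ l₂) = nonT l₁ + nonT l₂ :=
  List.countP_append
lemma cntT_append (l₁ l₂ : List Mv) : cntT (l₁ ++ l₂) = cntT l₁ + cntT l₂ :=
  List.countP_append
lemma length_eq (l : List Mv) : l.length = cntT l + nonT l := by
  induction l with
  | nil => rfl
  | cons m l ih =>
      simp [cntT, nonT, List.countP_cons] at *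
      cases m <;> simp [ih] <;> omega

lemma abs_walk_le (l : List Mv) : |walk l| ≤ (nonT l : ℤ) := by
  induction l with
  | nil => simp [walk_nil]
  | cons m l ih =>
      rw [walk_cons, nonT_cons]
      have h2 := abs_add_le m.stepOf (walk l)
      by_cases hm : m = Mv.T
      · subst hm
        simp only [Mv.stepOf, abs_zero] at h2 ⊢
        push_cast
        omega
      · have h1 : |m.stepOf| = 1 := by cases m <;> simp_all [Mv.stepOf]
        simp only [hm, if_false]
        push_cast
        omega

-- card of support ≤ number of T's
lemma card_cfg_le (l : List Mv) : (cfg l).support.card ≤ cntT l := by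
  induction l with
  | nil => simp [cfg]
  | cons m l ih =>
      have h1 : (cfg (m :: l)).support ⊆ m.cfgOf.support ∪ (shiftC m.stepOf (cfg l)).support :=
        Finsupp.support_add
      have h2 := Finset.card_le_card h1
      have h3 := Finset.card_union_le m.cfgOf.support (shiftC m.stepOf (cfg l)).support
      rw [shiftC_support_card] at h3
      have h4 : m.cfgOf.support.card ≤ (if m = Mv.T then 1 else 0) := by
        cases m <;> simp [Mv.cfgOf, sing] <;> exact Finset.card_le_card Finsupp.support_single_subset
      have h5 : cntT (m :: l) = (if m = Mv.T then 1 else 0) + cntT l := by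
        simp [cntT, List.countP_cons]; cases m <;> simp <;> omega
      omega

-- every support point is a prefix-walk value
lemma support_is_prefix (l : List Mv) (x : Multiplicative ℤ) (hx : x ∈ (cfg l).support) :
    ∃ i ≤ l.length, walk (l.take i) = toAdd x := by
  induction l generalizing x with
  | nil => simp [cfg] at hx
  | cons m l ih =>
      have := Finsupp.support_add hx
      rw [Finset.mem_union] at this
      rcases this with h | h
      · have hx0 : x = ofAdd 0 := by
          cases m with
          | T =>
              rw [show Mv.T.cfgOf = Finsupp.single (ofAdd (0:ℤ)) e1 from rfl,
                Finsupp.support_single_ne_zero _ (by decide : e1 ≠ 0)] at h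
              simpa using h
          | R => simp [Mv.cfgOf] at h
          | L => simp [Mv.cfgOf] at h
        exact ⟨0, by simp, by simp [hx0, walk_nil]⟩
      · rw [mem_shiftC_support] at h
        obtain ⟨i, hi, hw⟩ := ih _ h
        refine ⟨i + 1, by simpa using hi, ?_⟩
        rw [List.take_succ_cons, walk_cons, hw]
        simp

lemma travel_lb (l : List Mv) (i j : ℕ) (hij : i ≤ j) :
    |walk (l.take i)| + |walk (l.take j) - walk (l.take i)| + |walk l - walk (l.take j)|
      ≤ (nonT l : ℤ) := by
  have hsplit : l.take j = l.take i ++ (l.drop i).take (j - i) := by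
    rw [← List.take_add]
    congr 1
    omega
  have h1 : walk (l.take j) = walk (l.take i) + walk ((l.drop i).take (j - i)) := by
    rw [hsplit, walk_append]
  have h2 : walk l = walk (l.take j) + walk (l.drop j) := by
    rw [← walk_append, List.take_append_drop]
  have h3 : nonT l = nonT (l.take i) + nonT ((l.drop i).take (j - i)) + nonT (l.drop j) := by
    rw [← nonT_append, ← hsplit, ← nonT_append, List.take_append_drop]
  have b1 := abs_walk_le (l.take i)
  have b2 := abs_walk_le ((l.drop i).take (j - i))
  have b3 := abs_walk_le (l.drop j)
  rw [h1] at *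
  rw [h2, h3]
  push_cast
  have e2 : |walk (l.take i) + walk ((l.drop i).take (j - i)) - walk (l.take i)|
      = |walk ((l.drop i).take (j - i))| := by ring_nf
  have e3 : |walk (l.take i) + walk ((l.drop i).take (j-i)) + walk (l.drop j)
      - (walk (l.take i) + walk ((l.drop i).take (j-i)))| = |walk (l.drop j)| := by ring_nf
  omega

lemma suppZ_mk (f : Cfg) (p : ℤ) : suppZ (LP.mk f p) = f.support.image toAdd := rfl
lemma zOf_mk (f : Cfg) (p : ℤ) : zOf (LP.mk f p) = p := rfl

lemma mem_suppZ_prefix (l : List Mv) (y : ℤ)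
    (hy : y ∈ suppZ (LP.mk (cfg l) (walk l))) :
    ∃ i ≤ l.length, walk (l.take i) = y := by
  rw [suppZ_mk, Finset.mem_image] at hy
  obtain ⟨x, hx, rfl⟩ := hy
  exact support_is_prefix l x hx

lemma key_lower (l : List Mv) (g : Lamplighter) (hg : g = LP.mk (cfg l) (walk l)) :
    (suppZ g).card + min (2 * max (-(mOf g)) 0 + max (nOf g) 0 + |zOf g - max (nOf g) 0|)
      (2 * max (nOf g) 0 + max (-(mOf g)) 0 + |zOf g + max (-(mOf g)) 0|) ≤ (l.length : ℤ) := by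
  subst hg
  set z := walk l with hz
  set m := mOf (LP.mk (cfg l) z) with hm
  set n := nOf (LP.mk (cfg l) z) with hn
  -- prefix index realizing min m 0
  have h0 : walk (l.take 0) = 0 := rfl
  have hp : ∃ i ≤ l.length, walk (l.take i) = min m 0 := by
    rcases le_or_gt 0 m with h | h
    · exact ⟨0, Nat.zero_le _, by rw [h0]; omega⟩
    · have hne : (suppZ (LP.mk (cfg l) z)).Nonempty := by
        by_contra hc
        rw [Finset.not_nonempty_iff_eq_empty] at hc
        rw [hm, mOf, dif_neg (by simp [hc])] at h
        omega
      have : m ∈ suppZ (LP.mk (cfg l) (walk l)) := by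
        rw [hm, mOf, dif_pos hne]; exact Finset.min'_mem _ _
      obtain ⟨i, hi, hw⟩ := mem_suppZ_prefix l m this
      exact ⟨i, hi, by rw [hw]; omega⟩
  have hq : ∃ j ≤ l.length, walk (l.take j) = max n 0 := by
    rcases le_or_gt n 0 with h | h
    · exact ⟨0, Nat.zero_le _, by rw [h0]; omega⟩
    · have hne : (suppZ (LP.mk (cfg l) z)).Nonempty := by
        by_contra hc
        rw [Finset.not_nonempty_iff_eq_empty] at hc
        rw [hn, nOf, dif_neg (by simp [hc])] at h
        omega
      have : n ∈ suppZ (LP.mk (cfg l) (walk l)) := by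
        rw [hn, nOf, dif_pos hne]; exact Finset.max'_mem _ _
      obtain ⟨j, hj, hw⟩ := mem_suppZ_prefix l n this
      exact ⟨j, hj, by rw [hw]; omega⟩
  obtain ⟨i, hi, hwi⟩ := hp
  obtain ⟨j, hj, hwj⟩ := hq
  -- card bound
  have hcard : (suppZ (LP.mk (cfg l) z)).card ≤ cntT l := by
    rw [suppZ_mk]
    calc ((cfg l).support.image toAdd).card ≤ (cfg l).support.card := Finset.card_image_le
      _ ≤ cntT l := card_cfg_le l
  have hzOf : zOf (LP.mk (cfg l) z) = z := rfl
  rw [hzOf]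
  have hlen := length_eq l
  have hminm : min m 0 ≤ 0 := min_le_right _ _
  have hmaxn : (0:ℤ) ≤ max n 0 := le_max_right _ _
  -- travel bound
  have htravel : min (2 * max (-m) 0 + max n 0 + |z - max n 0|)
      (2 * max n 0 + max (-m) 0 + |z + max (-m) 0|) ≤ (nonT l : ℤ) := by
    have hLp : max (-m) 0 = -(min m 0) := by omega
    rcases le_or_gt i j with hij | hij
    · have := travel_lb l i j hij
      rw [hwi, hwj, ← hz] at this
      have habs1 : |min m 0| = -(min m 0) := abs_of_nonpos hminm
      have habs2 : |max n 0 - min m 0| = max n 0 - min m 0 := abs_of_nonneg (by omega)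
      calc min _ _ ≤ 2 * max (-m) 0 + max n 0 + |z - max n 0| := min_le_left _ _
        _ ≤ (nonT l : ℤ) := by rw [hLp]; omega
    · have := travel_lb l j i hij.le
      rw [hwi, hwj, ← hz] at this
      have habs1 : |max n 0| = max n 0 := abs_of_nonneg hmaxn
      have habs2 : |min m 0 - max n 0| = max n 0 - min m 0 := by
        rw [abs_sub_comm]; exact abs_of_nonneg (by omega)
      calc min _ _ ≤ 2 * max n 0 + max (-m) 0 + |z + max (-m) 0| := min_le_right _ _
        _ ≤ (nonT l : ℤ) := by
            rw [hLp, show z + -(min m 0) = z - min m 0 by ring]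
            omega
  have : ((suppZ (LP.mk (cfg l) z)).card : ℤ) ≤ (cntT l : ℤ) := by exact_mod_cast hcard
  have hlen' : (l.length : ℤ) = (cntT l : ℤ) + (nonT l : ℤ) := by exact_mod_cast hlen
  omega

-- named versions of earlier examples
lemma genH_eq : genH = LP.mk (sing 0) 0 := rfl
lemma genA_eq : genA = LP.mk 0 1 := rfl
lemma genA_inv : genA⁻¹ = LP.mk 0 (-1) := Mv.genOf_eq Mv.L
lemma genH_inv : genH⁻¹ = genH := by
  rw [eq_comm, eq_inv_iff_mul_eq_one, genH_eq, LP.mk_mul, shiftC_zero]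
  rw [show sing 0 + sing 0 = 0 by
    unfold sing; rw [← Finsupp.single_add, show e1 + e1 = 0 by decide, Finsupp.single_zero]]
  rfl

def sweepR (S : Finset (Multiplicative ℤ)) : ℤ → ℕ → List Mv
  | a, 0 => if ofAdd a ∈ S then [Mv.T] else []
  | a, k+1 => ((if ofAdd a ∈ S then [Mv.T] else []) ++ [Mv.R]) ++ sweepR S (a+1) k

def sweepL (S : Finset (Multiplicative ℤ)) : ℤ → ℕ → List Mv
  | a, 0 => if ofAdd a ∈ S then [Mv.T] else []
  | a, k+1 => ((if ofAdd a ∈ S then [Mv.T] else []) ++ [Mv.L]) ++ sweepL S (a-1) k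

lemma sweepR_congr (k : ℕ) : ∀ (a : ℤ) (S S' : Finset (Multiplicative ℤ)),
    (∀ x : ℤ, a ≤ x → x ≤ a + k → (ofAdd x ∈ S ↔ ofAdd x ∈ S')) →
    sweepR S a k = sweepR S' a k := by
  induction k with
  | zero =>
      intro a S S' h
      simp only [sweepR, h a le_rfl (by omega)]
  | succ k ih =>
      intro a S S' h
      simp only [sweepR, h a le_rfl (by omega),
        ih (a+1) S S' (fun x h1 h2 => h x (by omega) (by omega))]

lemma sweepL_congr (k : ℕ) : ∀ (a : ℤ) (S S' : Finset (Multiplicative ℤ)),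
    (∀ x : ℤ, a - k ≤ x → x ≤ a → (ofAdd x ∈ S ↔ ofAdd x ∈ S')) →
    sweepL S a k = sweepL S' a k := by
  induction k with
  | zero =>
      intro a S S' h
      simp only [sweepL, h a (by omega) le_rfl]
  | succ k ih =>
      intro a S S' h
      simp only [sweepL, h a (by omega) le_rfl,
        ih (a-1) S S' (fun x h1 h2 => h x (by push_cast at *; omega) (by omega))]

lemma toAdd_eq_iff (x : Multiplicative ℤ) (a : ℤ) : toAdd x = a ↔ x = ofAdd a := by
  constructor
  · intro h; rw [← h]; rfl
  · intro h; rw [h]; rfl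

lemma sweepR_spec (k : ℕ) : ∀ (a : ℤ) (S : Finset (Multiplicative ℤ)),
    (∀ x ∈ S, a ≤ toAdd x ∧ toAdd x ≤ a + k) →
    walk (sweepR S a k) = k ∧ (sweepR S a k).length = k + S.card ∧
    shiftC a (cfg (sweepR S a k)) = ∑ x ∈ S, Finsupp.single x e1 := by
  induction k with
  | zero =>
      intro a S h
      by_cases hm : ofAdd a ∈ S
      · have hS : S = {ofAdd a} := by
          apply Finset.eq_singleton_iff_unique_mem.mpr
          refine ⟨hm, fun x hx => ?_⟩
          have := h x hx
          rw [← toAdd_eq_iff]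
          omega
        have hunf : sweepR S a 0 = [Mv.T] := by simp only [sweepR, if_pos hm]
        rw [hunf, hS]
        refine ⟨rfl, by simp, ?_⟩
        rw [show cfg [Mv.T] = sing 0 by simp [cfg, Mv.cfgOf, shiftC_zero_fn, add_zero],
          shiftC_sing, add_zero, Finset.sum_singleton]
        rfl
      · have hS : S = ∅ := by
          rw [Finset.eq_empty_iff_forall_notMem]
          intro x hx
          have := h x hx
          have : x = ofAdd a := by rw [← toAdd_eq_iff]; omega
          exact hm (this ▸ hx)
        simp only [sweepR, if_neg hm, hS]
        refine ⟨rfl, by simp, ?_⟩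
        simp [cfg, shiftC_zero_fn]
  | succ k ih =>
      intro a S h
      have htail : sweepR S (a+1) k = sweepR (S.erase (ofAdd a)) (a+1) k := by
        apply sweepR_congr
        intro x h1 h2
        rw [Finset.mem_erase]
        have : ofAdd x ≠ ofAdd a := by
          intro hc
          have : x = a := by
            have := congrArg toAdd hc
            simpa using this
          omega
        tauto
      have hsub : ∀ x ∈ S.erase (ofAdd a), a + 1 ≤ toAdd x ∧ toAdd x ≤ (a+1) + k := by
        intro x hx
        rw [Finset.mem_erase] at hx
        have h2 := h x hx.2
        have : toAdd x ≠ a := by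
          intro hc
          exact hx.1 ((toAdd_eq_iff x a).mp hc)
        push_cast at h2 ⊢
        omega
      obtain ⟨ihw, ihl, ihc⟩ := ih (a+1) (S.erase (ofAdd a)) hsub
      have hrw : sweepR S a (k+1)
          = ((if ofAdd a ∈ S then [Mv.T] else []) ++ [Mv.R]) ++ sweepR (S.erase (ofAdd a)) (a+1) k := by
        rw [sweepR, htail]
      by_cases hm : ofAdd a ∈ S
      · rw [hrw, if_pos hm]
        have hcard : S.card = S.card - 1 + 1 := by
          have := Finset.card_pos.mpr ⟨_, hm⟩
          omega
        constructor
        · rw [walk_append, ihw, show walk ([Mv.T] ++ [Mv.R]) = 1 from rfl]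
          push_cast; ring
        constructor
        · rw [List.length_append, ihl, Finset.card_erase_of_mem hm]
          simp only [List.length_append, List.length_cons, List.length_nil]
          omega
        · rw [cfg_append, shiftC_add, shiftC_shiftC,
            show walk ([Mv.T] ++ [Mv.R]) = 1 from rfl,
            show cfg ([Mv.T] ++ [Mv.R]) = sing 0 by
              simp [cfg, Mv.cfgOf, shiftC_zero_fn, shiftC_zero, add_zero],
            shiftC_sing, add_zero, ihc, ← Finset.add_sum_erase _ _ hm]
          rfl
      · rw [hrw, if_neg hm, Finset.erase_eq_of_notMem hm] at *
        constructor
        · rw [List.nil_append, walk_append, ihw, show walk [Mv.R] = 1 from rfl]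
          push_cast; ring
        constructor
        · rw [List.nil_append, List.length_append, ihl]
          simp only [List.length_cons, List.length_nil]
          omega
        · rw [List.nil_append, cfg_append, shiftC_add, shiftC_shiftC,
            show walk [Mv.R] = 1 from rfl,
            show cfg [Mv.R] = 0 by simp [cfg, Mv.cfgOf, shiftC_zero_fn],
            ihc]
          simp [shiftC_zero_fn]

lemma sweepL_spec (k : ℕ) : ∀ (a : ℤ) (S : Finset (Multiplicative ℤ)),
    (∀ x ∈ S, a - k ≤ toAdd x ∧ toAdd x ≤ a) →
    walk (sweepL S a k) = -k ∧ (sweepL S a k).length = k + S.card ∧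
    shiftC a (cfg (sweepL S a k)) = ∑ x ∈ S, Finsupp.single x e1 := by
  induction k with
  | zero =>
      intro a S h
      by_cases hm : ofAdd a ∈ S
      · have hS : S = {ofAdd a} := by
          apply Finset.eq_singleton_iff_unique_mem.mpr
          refine ⟨hm, fun x hx => ?_⟩
          have := h x hx
          rw [← toAdd_eq_iff]
          omega
        have hunf : sweepL S a 0 = [Mv.T] := by simp only [sweepL, if_pos hm]
        rw [hunf, hS]
        refine ⟨rfl, by simp, ?_⟩
        rw [show cfg [Mv.T] = sing 0 by simp [cfg, Mv.cfgOf, shiftC_zero_fn, add_zero],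
          shiftC_sing, add_zero, Finset.sum_singleton]
        rfl
      · have hS : S = ∅ := by
          rw [Finset.eq_empty_iff_forall_notMem]
          intro x hx
          have := h x hx
          have : x = ofAdd a := by rw [← toAdd_eq_iff]; omega
          exact hm (this ▸ hx)
        simp only [sweepL, if_neg hm, hS]
        refine ⟨rfl, by simp, ?_⟩
        simp [cfg, shiftC_zero_fn]
  | succ k ih =>
      intro a S h
      have htail : sweepL S (a-1) k = sweepL (S.erase (ofAdd a)) (a-1) k := by
        apply sweepL_congr
        intro x h1 h2
        rw [Finset.mem_erase]
        have : ofAdd x ≠ ofAdd a := by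
          intro hc
          have : x = a := by
            have := congrArg toAdd hc
            simpa using this
          omega
        tauto
      have hsub : ∀ x ∈ S.erase (ofAdd a), (a-1) - (k:ℤ) ≤ toAdd x ∧ toAdd x ≤ a - 1 := by
        intro x hx
        rw [Finset.mem_erase] at hx
        have h2 := h x hx.2
        have : toAdd x ≠ a := by
          intro hc
          exact hx.1 ((toAdd_eq_iff x a).mp hc)
        push_cast at h2 ⊢
        omega
      obtain ⟨ihw, ihl, ihc⟩ := ih (a-1) (S.erase (ofAdd a)) hsub
      have hrw : sweepL S a (k+1)
          = ((if ofAdd a ∈ S then [Mv.T] else []) ++ [Mv.L]) ++ sweepL (S.erase (ofAdd a)) (a-1) k := by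
        rw [sweepL, htail]
      by_cases hm : ofAdd a ∈ S
      · rw [hrw, if_pos hm]
        have hcard : S.card = S.card - 1 + 1 := by
          have := Finset.card_pos.mpr ⟨_, hm⟩
          omega
        constructor
        · rw [walk_append, ihw, show walk ([Mv.T] ++ [Mv.L]) = -1 from rfl]
          push_cast; ring
        constructor
        · rw [List.length_append, ihl, Finset.card_erase_of_mem hm]
          simp only [List.length_append, List.length_cons, List.length_nil]
          omega
        · rw [cfg_append, shiftC_add, shiftC_shiftC,
            show walk ([Mv.T] ++ [Mv.L]) = -1 from rfl,
            show cfg ([Mv.T] ++ [Mv.L]) = sing 0 by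
              simp [cfg, Mv.cfgOf, shiftC_zero_fn, shiftC_zero, add_zero],
            shiftC_sing, add_zero, show a + -1 = a - 1 by ring, ihc,
            ← Finset.add_sum_erase _ _ hm]
          rfl
      · rw [hrw, if_neg hm, Finset.erase_eq_of_notMem hm] at *
        constructor
        · rw [List.nil_append, walk_append, ihw, show walk [Mv.L] = -1 from rfl]
          push_cast; ring
        constructor
        · rw [List.nil_append, List.length_append, ihl]
          simp only [List.length_cons, List.length_nil]
          omega
        · rw [List.nil_append, cfg_append, shiftC_add, shiftC_shiftC,
            show walk [Mv.L] = -1 from rfl,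
            show cfg [Mv.L] = 0 by simp [cfg, Mv.cfgOf, shiftC_zero_fn],
            show a + -1 = a - 1 by ring, ihc]
          simp [shiftC_zero_fn]

lemma walk_replicate (k : ℕ) (m : Mv) : walk (List.replicate k m) = k * m.stepOf := by
  induction k with
  | zero => simp [walk_nil]
  | succ k ih => rw [List.replicate_succ, walk_cons, ih]; push_cast; ring

lemma cfg_replicate (k : ℕ) (m : Mv) (hm : m ≠ Mv.T) : cfg (List.replicate k m) = 0 := by
  induction k with
  | zero => rfl
  | succ k ih =>
      rw [List.replicate_succ, cfg, ih, shiftC_zero_fn, add_zero]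
      cases m
      · rfl
      · rfl
      · exact absurd rfl hm

lemma e1_unique : ∀ a : Additive (Multiplicative (ZMod 2)), a ≠ 0 → a = e1 := by decide

lemma f_eq_sum (f : Cfg) : ∑ x ∈ f.support, Finsupp.single x e1 = f := by
  have h1 : ∑ x ∈ f.support, Finsupp.single x e1 = ∑ x ∈ f.support, Finsupp.single x (f x) :=
    Finset.sum_congr rfl fun x hx => by
      rw [e1_unique (f x) (Finsupp.mem_support_iff.mp hx)]
  rw [h1]
  exact Finsupp.sum_single f

lemma g_eq_mk (g : Lamplighter) : g = LP.mk (toAdd g.left) (zOf g) := rfl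

lemma suppZ_bounds (g : Lamplighter) (x : Multiplicative ℤ) (hx : x ∈ (toAdd g.left).support) :
    mOf g ≤ toAdd x ∧ toAdd x ≤ nOf g := by
  have hmem : toAdd x ∈ suppZ g := Finset.mem_image_of_mem _ hx
  have hne : (suppZ g).Nonempty := ⟨_, hmem⟩
  rw [mOf, dif_pos hne, nOf, dif_pos hne]
  exact ⟨Finset.min'_le _ _ hmem, Finset.le_max' _ _ hmem⟩

lemma card_suppZ (g : Lamplighter) : (suppZ g).card = (toAdd g.left).support.card :=
  Finset.card_image_of_injective _ (fun x y h => h)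

lemma exists_word1 (g : Lamplighter) :
    ∃ l : List Mv, (l.map Mv.genOf).prod = g ∧
      (l.length : ℤ) = (suppZ g).card
        + (2 * max (-(mOf g)) 0 + max (nOf g) 0 + |zOf g - max (nOf g) 0|) := by
  set f := toAdd g.left with hf
  set z := zOf g with hz
  set S := f.support with hS
  set L := max (-(mOf g)) 0 with hL
  set R := max (nOf g) 0 with hR
  have hL0 : 0 ≤ L := le_max_right _ _
  have hR0 : 0 ≤ R := le_max_right _ _
  have hbound : ∀ x ∈ S, -L ≤ toAdd x ∧ toAdd x ≤ -L + ((L + R).toNat : ℤ) := by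
    intro x hx
    have := suppZ_bounds g x hx
    rw [Int.toNat_of_nonneg (by omega)]
    omega
  obtain ⟨hw, hlen, hc⟩ := sweepR_spec (L + R).toNat (-L) S hbound
  set tail := if R ≤ z then List.replicate (z - R).toNat Mv.R else List.replicate (R - z).toNat Mv.L
    with htail
  refine ⟨List.replicate L.toNat Mv.L ++ sweepR S (-L) (L + R).toNat ++ tail, ?_, ?_⟩
  · rw [prod_eq, g_eq_mk g]
    have hwalkrep : walk (List.replicate L.toNat Mv.L) = -L := by
      rw [walk_replicate, Int.toNat_of_nonneg hL0]; simp [Mv.stepOf]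
    have hwt : walk tail = z - R := by
      rw [htail]
      split
      · rw [walk_replicate, Int.toNat_of_nonneg (by omega)]; simp [Mv.stepOf]
      · rw [walk_replicate, Int.toNat_of_nonneg (by omega)]; simp [Mv.stepOf]
    have hct : cfg tail = 0 := by
      rw [htail]; split <;> exact cfg_replicate _ _ (by simp)
    have hwalk : walk (List.replicate L.toNat Mv.L ++ sweepR S (-L) (L + R).toNat ++ tail) = z := by
      rw [walk_append, walk_append, hwalkrep, hw, hwt, Int.toNat_of_nonneg (by omega)]
      ring
    have hcfg : cfg (List.replicate L.toNat Mv.L ++ sweepR S (-L) (L + R).toNat ++ tail) = f := by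
      rw [cfg_append, cfg_append, cfg_replicate _ _ (by simp), hct, shiftC_zero_fn, add_zero,
        hwalkrep, zero_add, hc, f_eq_sum]
    rw [hwalk, hcfg]
  · rw [List.length_append, List.length_append, hlen, List.length_replicate]
    have hlt : (tail.length : ℤ) = |z - R| := by
      rw [htail]
      split
      · rw [List.length_replicate]
        rw [Int.toNat_of_nonneg (by omega), abs_of_nonneg (by omega)]
      · rw [List.length_replicate]
        rw [Int.toNat_of_nonneg (by omega), abs_of_nonpos (by omega)]
        ring
    rw [card_suppZ]
    push_cast [hlt, Int.toNat_of_nonneg hL0, Int.toNat_of_nonneg (show (0:ℤ) ≤ L + R by omega)]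
    ring

lemma exists_word2 (g : Lamplighter) :
    ∃ l : List Mv, (l.map Mv.genOf).prod = g ∧
      (l.length : ℤ) = (suppZ g).card
        + (2 * max (nOf g) 0 + max (-(mOf g)) 0 + |zOf g + max (-(mOf g)) 0|) := by
  set f := toAdd g.left with hf
  set z := zOf g with hz
  set S := f.support with hS
  set L := max (-(mOf g)) 0 with hL
  set R := max (nOf g) 0 with hR
  have hL0 : 0 ≤ L := le_max_right _ _
  have hR0 : 0 ≤ R := le_max_right _ _
  have hbound : ∀ x ∈ S, R - ((L + R).toNat : ℤ) ≤ toAdd x ∧ toAdd x ≤ R := by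
    intro x hx
    have := suppZ_bounds g x hx
    rw [Int.toNat_of_nonneg (by omega)]
    omega
  obtain ⟨hw, hlen, hc⟩ := sweepL_spec (L + R).toNat R S hbound
  set tail := if -L ≤ z then List.replicate (z + L).toNat Mv.R else List.replicate (-L - z).toNat Mv.L
    with htail
  refine ⟨List.replicate R.toNat Mv.R ++ sweepL S R (L + R).toNat ++ tail, ?_, ?_⟩
  · rw [prod_eq, g_eq_mk g]
    have hwalkrep : walk (List.replicate R.toNat Mv.R) = R := by
      rw [walk_replicate, Int.toNat_of_nonneg hR0]; simp [Mv.stepOf]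
    have hwt : walk tail = z + L := by
      rw [htail]
      split
      · rw [walk_replicate, Int.toNat_of_nonneg (by omega)]; simp [Mv.stepOf]
      · rw [walk_replicate, Int.toNat_of_nonneg (by omega)]; simp [Mv.stepOf]
    have hct : cfg tail = 0 := by
      rw [htail]; split <;> exact cfg_replicate _ _ (by simp)
    have hwalk : walk (List.replicate R.toNat Mv.R ++ sweepL S R (L + R).toNat ++ tail) = z := by
      rw [walk_append, walk_append, hwalkrep, hw, hwt, Int.toNat_of_nonneg (by omega)]
      ring
    have hcfg : cfg (List.replicate R.toNat Mv.R ++ sweepL S R (L + R).toNat ++ tail) = f := by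
      rw [cfg_append, cfg_append, cfg_replicate _ _ (by simp), hct, shiftC_zero_fn, add_zero,
        hwalkrep, zero_add, hc, f_eq_sum]
    rw [hwalk, hcfg]
  · rw [List.length_append, List.length_append, hlen, List.length_replicate]
    have hlt : (tail.length : ℤ) = |z + L| := by
      rw [htail]
      split
      · rw [List.length_replicate]
        rw [Int.toNat_of_nonneg (by omega), abs_of_nonneg (by omega)]
      · rw [List.length_replicate]
        rw [Int.toNat_of_nonneg (by omega), abs_of_nonpos (by omega)]
        ring
    rw [card_suppZ]
    push_cast [hlt, Int.toNat_of_nonneg hR0, Int.toNat_of_nonneg (show (0:ℤ) ≤ L + R by omega)]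
    ring

lemma letters_to_moves : ∀ (l : List Lamplighter),
    (∀ x ∈ l, x ∈ ({genA, genH} : Set Lamplighter) ∨ x⁻¹ ∈ ({genA, genH} : Set Lamplighter)) →
    ∃ l' : List Mv, l'.map Mv.genOf = l := by
  intro l
  induction l with
  | nil => exact fun _ => ⟨[], rfl⟩
  | cons x l ih =>
      intro h
      obtain ⟨l', hl'⟩ := ih (fun y hy => h y (List.mem_cons_of_mem _ hy))
      have hx := h x (List.mem_cons_self)
      simp only [Set.mem_insert_iff, Set.mem_singleton_iff] at hx
      rcases hx with (rfl | rfl) | hx | hx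
      · exact ⟨Mv.R :: l', by rw [List.map_cons, hl']; rfl⟩
      · exact ⟨Mv.T :: l', by rw [List.map_cons, hl']; rfl⟩
      · refine ⟨Mv.L :: l', ?_⟩
        rw [List.map_cons, hl']
        congr 1
        show genA⁻¹ = x
        rw [← hx, inv_inv]
      · refine ⟨Mv.T :: l', ?_⟩
        rw [List.map_cons, hl']
        congr 1
        show genH = x
        have h2 := congrArg Inv.inv hx
        rw [inv_inv, genH_inv] at h2
        exact h2.symm

lemma moves_letters_ok (l : List Mv) :
    ∀ x ∈ l.map Mv.genOf,
      x ∈ ({genA, genH} : Set Lamplighter) ∨ x⁻¹ ∈ ({genA, genH} : Set Lamplighter) := by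
  intro x hx
  rw [List.mem_map] at hx
  obtain ⟨m, _, rfl⟩ := hx
  cases m with
  | R => left; exact Set.mem_insert _ _
  | L =>
      right
      show (genA⁻¹)⁻¹ ∈ _
      rw [inv_inv]
      exact Set.mem_insert _ _
  | T => left; exact Set.mem_insert_of_mem _ rfl

theorem lamplighter_wordLength_formula' (g : Lamplighter) :
    (wordLength {genA, genH} g : ℤ) =
      (suppZ g).card +
        min (2 * max (-(mOf g)) 0 + max (nOf g) 0 + |zOf g - max (nOf g) 0|)
          (2 * max (nOf g) 0 + max (-(mOf g)) 0 + |zOf g + max (-(mOf g)) 0|) := by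
  obtain ⟨l1, hp1, hl1⟩ := exists_word1 g
  obtain ⟨l2, hp2, hl2⟩ := exists_word2 g
  have hmem : ∀ l : List Mv, (l.map Mv.genOf).prod = g →
      l.length ∈ {n | ∃ l' : List Lamplighter, l'.length = n ∧
        (∀ x ∈ l', x ∈ ({genA, genH} : Set Lamplighter)
          ∨ x⁻¹ ∈ ({genA, genH} : Set Lamplighter)) ∧ l'.prod = g} :=
    fun l hp => ⟨l.map Mv.genOf, by simp, moves_letters_ok l, hp⟩
  have hne : {n | ∃ l' : List Lamplighter, l'.length = n ∧
      (∀ x ∈ l', x ∈ ({genA, genH} : Set Lamplighter)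
        ∨ x⁻¹ ∈ ({genA, genH} : Set Lamplighter)) ∧ l'.prod = g}.Nonempty :=
    ⟨l1.length, hmem l1 hp1⟩
  have hinf := Nat.sInf_mem hne
  obtain ⟨l, hlen, hlet, hprod⟩ := hinf
  obtain ⟨l', hl'⟩ := letters_to_moves l hlet
  have hg : g = LP.mk (cfg l') (walk l') := by rw [← hprod, ← hl', prod_eq]
  have hlow := key_lower l' g hg
  have hlen' : l'.length = wordLength {genA, genH} g := by
    unfold wordLength
    rw [← hlen, ← hl', List.length_map]
  rw [hlen'] at hlow
  have h1 : wordLength {genA, genH} g ≤ l1.length := Nat.sInf_le (hmem l1 hp1)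
  have h2 : wordLength {genA, genH} g ≤ l2.length := Nat.sInf_le (hmem l2 hp2)
  have h1' : (wordLength {genA, genH} g : ℤ) ≤ (l1.length : ℤ) := by exact_mod_cast h1
  have h2' : (wordLength {genA, genH} g : ℤ) ≤ (l2.length : ℤ) := by exact_mod_cast h2
  rw [hl1] at h1'
  rw [hl2] at h2'
  omega

/-- For `g = (f, z) ∈ ℤ₂ ≀ ℤ`, the word length of `g` with respect to
`{a, h}` equals
`#supp f + min{2·max{−m,0} + max{n,0} + |z − max{n,0}|, 2·max{n,0} + max{−m,0} + |z + max{−m,0}|}`. -/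
theorem lamplighter_wordLength_formula (g : Lamplighter) :
    (wordLength {genA, genH} g : ℤ) =
      (suppZ g).card +
        min (2 * max (-(mOf g)) 0 + max (nOf g) 0 + |zOf g - max (nOf g) 0|)
          (2 * max (nOf g) 0 + max (-(mOf g)) 0 + |zOf g + max (-(mOf g)) 0|) :=
  lamplighter_wordLength_formula' g

end
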